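/- Let f : ℝ^d → [0,∞) be integrable and log-supermodular, and let g be the standard Gaussian density g(x) = (2π)^{-d/2} exp(-|x|²/2). Then f * g is log-supermodular. -/

import Mathlib

open MeasureTheory Real

open scoped ENNReal

private lemma ad_real {s t M N : ℝ} (hs0 : 0 ≤ s) (ht0 : 0 ≤ t) (hN0 : 0 ≤ N)
    (hs : s ≤ M) (ht : t ≤ M) (hst : s * t ≤ M * N) : s + t ≤ M + N := by
  rcases eq_or_lt_of_le (hs0.trans hs) with hM | hM
  · have h1 : s = 0 := le_antisymm (hs.trans hM.ge) hs0
    have h2 : t = 0 := le_antisymm (ht.trans hM.ge) ht0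
    simp [h1, h2, ← hM]
    linarith
  · have key : M * (s + t) ≤ M * (M + N) := by nlinarith [mul_nonneg (sub_nonneg.2 hs) (sub_nonneg.2 ht)]
    exact le_of_mul_le_mul_left key hM

private lemma ad_sum_le {s t M N : ℝ≥0∞} (hs : s ≤ M) (ht : t ≤ M) (hst : s * t ≤ M * N) :
    s + t ≤ M + N := by
  rcases eq_top_or_lt_top M with hM | hM
  · simp [hM]
  rcases eq_top_or_lt_top N with hN | hN
  · simp [hN]
  have hsf : s ≠ ⊤ := (hs.trans_lt hM).ne
  have htf : t ≠ ⊤ := (ht.trans_lt hM).ne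
  lift s to NNReal using hsf
  lift t to NNReal using htf
  lift M to NNReal using hM.ne
  lift N to NNReal using hN.ne
  rw [← ENNReal.coe_add, ← ENNReal.coe_add, ENNReal.coe_le_coe]
  rw [ENNReal.coe_le_coe] at hs ht
  rw [← ENNReal.coe_mul, ← ENNReal.coe_mul, ENNReal.coe_le_coe] at hst
  have := ad_real s.coe_nonneg t.coe_nonneg N.coe_nonneg (by exact_mod_cast hs)
    (by exact_mod_cast ht) (by exact_mod_cast hst)
  exact_mod_cast this

private lemma ad_pair {a b a' b' c e c' e' : ℝ≥0∞}
    (h1 : a * b ≤ c * e) (h2 : a' * b' ≤ c' * e') (h3 : a * b' ≤ c * e')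
    (h4 : a' * b ≤ c * e') :
    a * b' + a' * b ≤ c * e' + c' * e := by
  refine ad_sum_le h3 h4 ?_
  calc a * b' * (a' * b) = a * b * (a' * b') := by ring
    _ ≤ c * e * (c' * e') := mul_le_mul' h1 h2
    _ = c * e' * (c' * e) := by ring

private lemma fft_one (f₁ f₂ f₃ f₄ : ℝ → ℝ≥0∞)
    (m₁ : Measurable f₁) (m₂ : Measurable f₂) (m₃ : Measurable f₃) (m₄ : Measurable f₄)
    (h : ∀ u w, f₁ u * f₂ w ≤ f₃ (u ⊓ w) * f₄ (u ⊔ w)) :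
    (∫⁻ x, f₁ x) * ∫⁻ x, f₂ x ≤ (∫⁻ x, f₃ x) * ∫⁻ x, f₄ x := by
  have key : ∀ u w : ℝ, u ≤ w → f₁ u * f₂ w + f₁ w * f₂ u ≤ f₃ u * f₄ w + f₃ w * f₄ u := by
    intro u w huw
    have h3 := h u w
    rw [inf_eq_left.2 huw, sup_eq_right.2 huw] at h3
    have h4 := h w u
    rw [inf_eq_right.2 huw, sup_eq_left.2 huw] at h4
    have h1 := h u u
    rw [inf_idem, sup_idem] at h1
    have h2 := h w w
    rw [inf_idem, sup_idem] at h2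
    exact ad_pair h1 h2 h3 h4
  have key2 : ∀ u w : ℝ, f₁ u * f₂ w + f₁ w * f₂ u ≤ f₃ u * f₄ w + f₃ w * f₄ u := by
    intro u w
    rcases le_total u w with huw | huw
    · exact key u w huw
    · rw [add_comm, add_comm (f₃ u * f₄ w)]
      exact key w u huw
  have e12 : ((∫⁻ x, f₁ x) * ∫⁻ x, f₂ x) + (∫⁻ x, f₁ x) * ∫⁻ x, f₂ x
      = ∫⁻ z : ℝ × ℝ, (f₁ z.1 * f₂ z.2 + f₁ z.2 * f₂ z.1)
        ∂((volume : Measure ℝ).prod volume) := by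
    rw [lintegral_add_left (show Measurable fun z : ℝ × ℝ => f₁ z.1 * f₂ z.2 from
      (m₁.comp measurable_fst).mul (m₂.comp measurable_snd))]
    rw [lintegral_prod_mul m₁.aemeasurable m₂.aemeasurable]
    congr 1
    rw [lintegral_congr fun z : ℝ × ℝ => mul_comm (f₁ z.2) (f₂ z.1)]
    rw [lintegral_prod_mul m₂.aemeasurable m₁.aemeasurable, mul_comm]
  have e34 : ((∫⁻ x, f₃ x) * ∫⁻ x, f₄ x) + (∫⁻ x, f₃ x) * ∫⁻ x, f₄ x
      = ∫⁻ z : ℝ × ℝ, (f₃ z.1 * f₄ z.2 + f₃ z.2 * f₄ z.1)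
        ∂((volume : Measure ℝ).prod volume) := by
    rw [lintegral_add_left (show Measurable fun z : ℝ × ℝ => f₃ z.1 * f₄ z.2 from
      (m₃.comp measurable_fst).mul (m₄.comp measurable_snd))]
    rw [lintegral_prod_mul m₃.aemeasurable m₄.aemeasurable]
    congr 1
    rw [lintegral_congr fun z : ℝ × ℝ => mul_comm (f₃ z.2) (f₄ z.1)]
    rw [lintegral_prod_mul m₄.aemeasurable m₃.aemeasurable, mul_comm]
  have H : ((∫⁻ x, f₁ x) * ∫⁻ x, f₂ x) + (∫⁻ x, f₁ x) * ∫⁻ x, f₂ x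
      ≤ ((∫⁻ x, f₃ x) * ∫⁻ x, f₄ x) + (∫⁻ x, f₃ x) * ∫⁻ x, f₄ x := by
    rw [e12, e34]
    exact lintegral_mono fun z => key2 z.1 z.2
  by_contra hc
  push_neg at hc
  exact absurd H (not_le.2 (ENNReal.add_lt_add hc hc))

private lemma cons_inf {n : ℕ} (a b : ℝ) (x y : Fin n → ℝ) :
    (Fin.cons a x ⊓ Fin.cons b y : Fin (n + 1) → ℝ) = Fin.cons (a ⊓ b) (x ⊓ y) := by
  funext i
  refine Fin.cases ?_ (fun j => ?_) i <;> simp [Pi.inf_apply]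

private lemma cons_sup {n : ℕ} (a b : ℝ) (x y : Fin n → ℝ) :
    (Fin.cons a x ⊔ Fin.cons b y : Fin (n + 1) → ℝ) = Fin.cons (a ⊔ b) (x ⊔ y) := by
  funext i
  refine Fin.cases ?_ (fun j => ?_) i <;> simp [Pi.sup_apply]

private lemma fft_dim : ∀ (d : ℕ) (f₁ f₂ f₃ f₄ : (Fin d → ℝ) → ℝ≥0∞),
    Measurable f₁ → Measurable f₂ → Measurable f₃ → Measurable f₄ →
    (∀ u w, f₁ u * f₂ w ≤ f₃ (u ⊓ w) * f₄ (u ⊔ w)) →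
    (∫⁻ x, f₁ x) * ∫⁻ x, f₂ x ≤ (∫⁻ x, f₃ x) * ∫⁻ x, f₄ x := by
  intro d
  induction d with
  | zero =>
    intro f₁ f₂ f₃ f₄ _ _ _ _ h
    have hconst : ∀ f : (Fin 0 → ℝ) → ℝ≥0∞, ∫⁻ x, f x = f default := by
      intro f
      have hf : f = fun _ => f default := funext fun x => by rw [Subsingleton.elim x default]
      rw [hf, lintegral_const]
      simp [volume_pi]
    rw [hconst f₁, hconst f₂, hconst f₃, hconst f₄]
    simpa using h default default
  | succ n ih =>
    intro f₁ f₂ f₃ f₄ m₁ m₂ m₃ m₄ h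
    have mcons : Measurable fun p : ℝ × (Fin n → ℝ) => (Fin.cons p.1 p.2 : Fin (n + 1) → ℝ) := by
      apply measurable_pi_lambda
      intro i
      refine Fin.cases ?_ (fun j => ?_) i
      · simpa using measurable_fst
      · have hm : Measurable fun c : ℝ × (Fin n → ℝ) => c.2 j := (measurable_pi_apply j).comp measurable_snd
        simpa using hm
    have hvol : ∀ f : (Fin (n + 1) → ℝ) → ℝ≥0∞, Measurable f →
        ∫⁻ x, f x = ∫⁻ x' : Fin n → ℝ, ∫⁻ a : ℝ, f (Fin.cons a x') := by
      intro f mf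
      have hmp := (volume_preserving_piFinSuccAbove (fun _ : Fin (n + 1) => ℝ) 0).symm
      have e1 : ∫⁻ p : ℝ × (Fin n → ℝ), f (Fin.cons p.1 p.2)
            ∂((volume : Measure ℝ).prod volume)
          = ∫⁻ x, f x := by
        have h2 := hmp.lintegral_comp mf
        rw [← Measure.volume_eq_prod, ← h2]
        refine lintegral_congr fun p => ?_
        congr 1
        simp [MeasurableEquiv.piFinSuccAbove, Fin.insertNthEquiv, Fin.insertNth_zero']
      rw [← e1, lintegral_prod_symm (fun p : ℝ × (Fin n → ℝ) => f (Fin.cons p.1 p.2))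
        (mf.comp mcons).aemeasurable]
    set F₁ : (Fin n → ℝ) → ℝ≥0∞ := fun x' => ∫⁻ a, f₁ (Fin.cons a x') with hF₁
    set F₂ : (Fin n → ℝ) → ℝ≥0∞ := fun x' => ∫⁻ a, f₂ (Fin.cons a x') with hF₂
    set F₃ : (Fin n → ℝ) → ℝ≥0∞ := fun x' => ∫⁻ a, f₃ (Fin.cons a x') with hF₃
    set F₄ : (Fin n → ℝ) → ℝ≥0∞ := fun x' => ∫⁻ a, f₄ (Fin.cons a x') with hF₄
    have mswap : Measurable fun p : (Fin n → ℝ) × ℝ => (Fin.cons p.2 p.1 : Fin (n + 1) → ℝ) :=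
      mcons.comp measurable_swap
    have mF₁ : Measurable F₁ := Measurable.lintegral_prod_right' (m₁.comp mswap)
    have mF₂ : Measurable F₂ := Measurable.lintegral_prod_right' (m₂.comp mswap)
    have mF₃ : Measurable F₃ := Measurable.lintegral_prod_right' (m₃.comp mswap)
    have mF₄ : Measurable F₄ := Measurable.lintegral_prod_right' (m₄.comp mswap)
    have hF : ∀ u' w', F₁ u' * F₂ w' ≤ F₃ (u' ⊓ w') * F₄ (u' ⊔ w') := by
      intro u' w'
      have msec : ∀ (f : (Fin (n + 1) → ℝ) → ℝ≥0∞) (c : Fin n → ℝ), Measurable f →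
          Measurable fun a : ℝ => f (Fin.cons a c) := by
        intro f c mf
        exact mf.comp (mcons.comp (measurable_id.prodMk measurable_const))
      refine fft_one _ _ _ _ (msec f₁ u' m₁) (msec f₂ w' m₂) (msec f₃ _ m₃) (msec f₄ _ m₄) ?_
      intro a b
      have := h (Fin.cons a u') (Fin.cons b w')
      rwa [cons_inf, cons_sup] at this
    rw [hvol f₁ m₁, hvol f₂ m₂, hvol f₃ m₃, hvol f₄ m₄]
    exact ih F₁ F₂ F₃ F₄ mF₁ mF₂ mF₃ mF₄ hF

private lemma fft_ae (d : ℕ) (f₁ f₂ f₃ f₄ : (Fin d → ℝ) → ℝ≥0∞)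
    (m₁ : AEMeasurable f₁) (m₂ : AEMeasurable f₂) (m₃ : AEMeasurable f₃) (m₄ : AEMeasurable f₄)
    (h : ∀ u w, f₁ u * f₂ w ≤ f₃ (u ⊓ w) * f₄ (u ⊔ w)) :
    (∫⁻ x, f₁ x) * ∫⁻ x, f₂ x ≤ (∫⁻ x, f₃ x) * ∫⁻ x, f₄ x := by
  have hae : ∀ᵐ x, m₁.mk f₁ x = f₁ x ∧ m₂.mk f₂ x = f₂ x ∧ m₃.mk f₃ x = f₃ x ∧
      m₄.mk f₄ x = f₄ x :=
    ((m₁.ae_eq_mk.symm.and m₂.ae_eq_mk.symm).and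
      (m₃.ae_eq_mk.symm.and m₄.ae_eq_mk.symm)).mono fun x hx => ⟨hx.1.1, hx.1.2, hx.2.1, hx.2.2⟩
  rw [Filter.eventually_iff, mem_ae_iff] at hae
  obtain ⟨N, hsub, hNmeas, hNnull⟩ := exists_measurable_superset_of_null hae
  have hout : ∀ x ∉ N, m₁.mk f₁ x = f₁ x ∧ m₂.mk f₂ x = f₂ x ∧ m₃.mk f₃ x = f₃ x ∧
      m₄.mk f₄ x = f₄ x := by
    intro x hx
    by_contra hcx
    exact hx (hsub hcx)
  classical
  set g₁ : (Fin d → ℝ) → ℝ≥0∞ := fun x => if x ∈ N then 0 else m₁.mk f₁ x with hg₁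
  set g₂ : (Fin d → ℝ) → ℝ≥0∞ := fun x => if x ∈ N then 0 else m₂.mk f₂ x with hg₂
  set g₃ : (Fin d → ℝ) → ℝ≥0∞ := fun x => if x ∈ N then ⊤ else m₃.mk f₃ x with hg₃
  set g₄ : (Fin d → ℝ) → ℝ≥0∞ := fun x => if x ∈ N then ⊤ else m₄.mk f₄ x with hg₄
  have mg₁ : Measurable g₁ := Measurable.ite hNmeas measurable_const m₁.measurable_mk
  have mg₂ : Measurable g₂ := Measurable.ite hNmeas measurable_const m₂.measurable_mk
  have mg₃ : Measurable g₃ := Measurable.ite hNmeas measurable_const m₃.measurable_mk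
  have mg₄ : Measurable g₄ := Measurable.ite hNmeas measurable_const m₄.measurable_mk
  have hle₁ : ∀ x, g₁ x ≤ f₁ x := by
    intro x
    by_cases hx : x ∈ N <;> simp [hg₁, hx]
    exact le_of_eq (hout x hx).1
  have hle₂ : ∀ x, g₂ x ≤ f₂ x := by
    intro x
    by_cases hx : x ∈ N <;> simp [hg₂, hx]
    exact le_of_eq (hout x hx).2.1
  have hge₃ : ∀ x, f₃ x ≤ g₃ x := by
    intro x
    by_cases hx : x ∈ N <;> simp [hg₃, hx]
    exact le_of_eq (hout x hx).2.2.1.symm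
  have hge₄ : ∀ x, f₄ x ≤ g₄ x := by
    intro x
    by_cases hx : x ∈ N <;> simp [hg₄, hx]
    exact le_of_eq (hout x hx).2.2.2.symm
  have heq : ∀ (g f : (Fin d → ℝ) → ℝ≥0∞), (∀ x ∉ N, g x = f x) → ∫⁻ x, g x = ∫⁻ x, f x := by
    intro g f hgf
    refine lintegral_congr_ae ?_
    rw [Filter.eventuallyEq_iff_exists_mem]
    exact ⟨Nᶜ, by rwa [mem_ae_iff, compl_compl], hgf⟩
  have e₁ : ∫⁻ x, g₁ x = ∫⁻ x, f₁ x :=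
    heq _ _ fun x hx => by simp [hg₁, hx, (hout x hx).1]
  have e₂ : ∫⁻ x, g₂ x = ∫⁻ x, f₂ x :=
    heq _ _ fun x hx => by simp [hg₂, hx, (hout x hx).2.1]
  have e₃ : ∫⁻ x, g₃ x = ∫⁻ x, f₃ x :=
    heq _ _ fun x hx => by simp [hg₃, hx, (hout x hx).2.2.1]
  have e₄ : ∫⁻ x, g₄ x = ∫⁻ x, f₄ x :=
    heq _ _ fun x hx => by simp [hg₄, hx, (hout x hx).2.2.2]
  rw [← e₁, ← e₂, ← e₃, ← e₄]
  refine fft_dim d g₁ g₂ g₃ g₄ mg₁ mg₂ mg₃ mg₄ ?_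
  intro u w
  calc g₁ u * g₂ w ≤ f₁ u * f₂ w := mul_le_mul' (hle₁ u) (hle₂ w)
    _ ≤ f₃ (u ⊓ w) * f₄ (u ⊔ w) := h u w
    _ ≤ g₃ (u ⊓ w) * g₄ (u ⊔ w) := mul_le_mul' (hge₃ _) (hge₄ _)

private lemma gauss_coord (p q r s : ℝ) :
    (min p q - min r s) ^ 2 + (max p q - max r s) ^ 2 ≤ (p - r) ^ 2 + (q - s) ^ 2 := by
  rcases le_total p q with h | h <;> rcases le_total r s with h' | h'
  · rw [min_eq_left h, min_eq_left h', max_eq_right h, max_eq_right h']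
  · rw [min_eq_left h, min_eq_right h', max_eq_right h, max_eq_left h']
    nlinarith [mul_nonneg (sub_nonneg.2 h) (sub_nonneg.2 h')]
  · rw [min_eq_right h, min_eq_left h', max_eq_left h, max_eq_right h']
    nlinarith [mul_nonneg (sub_nonneg.2 h) (sub_nonneg.2 h')]
  · rw [min_eq_right h, min_eq_right h', max_eq_left h, max_eq_left h']
    nlinarith

private lemma gauss_sum (d : ℕ) (x y u w : Fin d → ℝ) :
    (∑ i, ((x ⊓ y - u ⊓ w) i) ^ 2) + ∑ i, ((x ⊔ y - u ⊔ w) i) ^ 2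
      ≤ (∑ i, ((x - u) i) ^ 2) + ∑ i, ((y - w) i) ^ 2 := by
  rw [← Finset.sum_add_distrib, ← Finset.sum_add_distrib]
  refine Finset.sum_le_sum fun i _ => ?_
  simpa [Pi.inf_apply, Pi.sup_apply, Pi.sub_apply] using
    gauss_coord (x i) (y i) (u i) (w i)

theorem gaussian_convolution_logSupermodular (d : ℕ)
    (f : (Fin d → ℝ) → ℝ) (hfnn : ∀ x, 0 ≤ f x) (hfi : Integrable f)
    (hf : ∀ u w, f u * f w ≤ f (u ⊓ w) * f (u ⊔ w))
    (g : (Fin d → ℝ) → ℝ)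
    (hg : ∀ x, g x = (2 * π) ^ (-(d : ℝ) / 2) * Real.exp (-(∑ i, (x i) ^ 2) / 2)) :
    ∀ x y, (∫ z, f z * g (x - z)) * (∫ z, f z * g (y - z)) ≤
      (∫ z, f z * g (x ⊓ y - z)) * (∫ z, f z * g (x ⊔ y - z)) := by
  intro x y
  set C : ℝ := (2 * π) ^ (-(d : ℝ) / 2) with hC
  have hCpos : 0 < C := Real.rpow_pos_of_pos (by positivity) _
  set G : (Fin d → ℝ) → ℝ := fun v => C * Real.exp (-(∑ i, (v i) ^ 2) / 2) with hGdef
  have hgG : ∀ v, g v = G v := hg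
  have hGpos : ∀ v, 0 < G v := fun v => mul_pos hCpos (Real.exp_pos _)
  have hGcont : Continuous G := by
    refine continuous_const.mul (Real.continuous_exp.comp ?_)
    exact (continuous_finset_sum _ fun i _ => (continuous_apply i).pow 2).neg.div_const 2
  have hGle : ∀ v, G v ≤ C := by
    intro v
    have h1 : Real.exp (-(∑ i, (v i) ^ 2) / 2) ≤ 1 := by
      rw [Real.exp_le_one_iff]
      have : (0 : ℝ) ≤ ∑ i, (v i) ^ 2 := Finset.sum_nonneg fun i _ => sq_nonneg _
      linarith
    have h2 : C * Real.exp (-(∑ i, (v i) ^ 2) / 2) ≤ C * 1 :=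
      mul_le_mul_of_nonneg_left h1 hCpos.le
    simpa [hGdef] using h2
  have hInt : ∀ c, Integrable fun z => f z * G (c - z) := by
    intro c
    have hb : Integrable fun z => G (c - z) * f z :=
      Integrable.bdd_mul hfi
        ((hGcont.comp (continuous_const.sub continuous_id)).aestronglyMeasurable)
        (c := C) (Filter.Eventually.of_forall fun z => by rw [Real.norm_eq_abs, abs_of_pos (hGpos _)]; exact hGle _)
    refine hb.congr (Filter.Eventually.of_forall fun z => mul_comm _ _)
  have hGmul : ∀ u w, G (x - u) * G (y - w) ≤ G (x ⊓ y - u ⊓ w) * G (x ⊔ y - u ⊔ w) := by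
    intro u w
    have e : ∀ A B : ℝ, (C * Real.exp A) * (C * Real.exp B) = C * C * Real.exp (A + B) := by
      intro A B; rw [Real.exp_add]; ring
    simp only [hGdef]
    rw [e, e]
    refine mul_le_mul_of_nonneg_left ?_ (mul_nonneg hCpos.le hCpos.le)
    refine Real.exp_le_exp.2 ?_
    have := gauss_sum d x y u w
    linarith
  have nonneg : ∀ (c : Fin d → ℝ) z, 0 ≤ f z * G (c - z) := fun c z =>
    mul_nonneg (hfnn z) (hGpos _).le
  have key := fft_ae d (fun z => ENNReal.ofReal (f z * G (x - z)))
      (fun z => ENNReal.ofReal (f z * G (y - z)))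
      (fun z => ENNReal.ofReal (f z * G (x ⊓ y - z)))
      (fun z => ENNReal.ofReal (f z * G (x ⊔ y - z)))
      (ENNReal.measurable_ofReal.comp_aemeasurable (hInt x).aemeasurable)
      (ENNReal.measurable_ofReal.comp_aemeasurable (hInt y).aemeasurable)
      (ENNReal.measurable_ofReal.comp_aemeasurable (hInt (x ⊓ y)).aemeasurable)
      (ENNReal.measurable_ofReal.comp_aemeasurable (hInt (x ⊔ y)).aemeasurable)
      (by
        intro u w
        rw [← ENNReal.ofReal_mul (nonneg x u), ← ENNReal.ofReal_mul (nonneg (x ⊓ y) _)]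
        refine ENNReal.ofReal_le_ofReal ?_
        calc f u * G (x - u) * (f w * G (y - w))
            = (f u * f w) * (G (x - u) * G (y - w)) := by ring
          _ ≤ (f (u ⊓ w) * f (u ⊔ w)) * (G (x ⊓ y - u ⊓ w) * G (x ⊔ y - u ⊔ w)) :=
              mul_le_mul (hf u w) (hGmul u w)
                (mul_nonneg (hGpos _).le (hGpos _).le)
                (mul_nonneg (hfnn _) (hfnn _))
          _ = f (u ⊓ w) * G (x ⊓ y - u ⊓ w) * (f (u ⊔ w) * G (x ⊔ y - u ⊔ w)) := by ring)
  have conv : ∀ c, ∫ z, f z * G (c - z)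
      = (∫⁻ z, ENNReal.ofReal (f z * G (c - z))).toReal := by
    intro c
    rw [integral_eq_lintegral_of_nonneg_ae (Filter.Eventually.of_forall (nonneg c))
      (hInt c).aestronglyMeasurable]
  have fin : ∀ c, (∫⁻ z, ENNReal.ofReal (f z * G (c - z))) ≠ ⊤ := fun c =>
    (hInt c).lintegral_lt_top.ne
  simp only [hgG]
  rw [conv x, conv y, conv (x ⊓ y), conv (x ⊔ y), ← ENNReal.toReal_mul, ← ENNReal.toReal_mul]
  exact ENNReal.toReal_mono (ENNReal.mul_ne_top (fin _) (fin _)) key
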